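/- If ρ = |φ⟩⟨φ| is a pure state on C^d, then the maximal fidelity with maximally coherent states equals (1/d)(∑_i |⟨i|φ⟩|)², i.e. min over maximally coherent σ of (1 − F(σ, ρ)) = 1 − (1/d)(∑_i |⟨i|φ⟩|)². -/

import Mathlib

open Matrix BigOperators ComplexOrder

/-- A density operator: positive semidefinite with unit trace. -/
def IsDensity {d : ℕ} (ρ : Matrix (Fin d) (Fin d) ℂ) : Prop :=
  ρ.PosSemidef ∧ ρ.trace = 1

/-- The maximally coherent state vector `(1/√d) ∑ i e^{iθ_i}|i⟩` with phases `θ`. -/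
noncomputable def mcVec (d : ℕ) (θ : Fin d → ℝ) : Fin d → ℂ :=
  fun i => (((Real.sqrt d)⁻¹ : ℝ) : ℂ) * Complex.exp (Complex.I * (θ i : ℂ))

/-- Maximal fidelity of `ρ` with maximally coherent states. -/
noncomputable def maxCohFid {d : ℕ} (ρ : Matrix (Fin d) (Fin d) ℂ) : ℝ :=
  sSup {r : ℝ | ∃ θ : Fin d → ℝ,
    r = (star (mcVec d θ) ⬝ᵥ ρ.mulVec (mcVec d θ)).re}

private lemma mc_dot_sq {d : ℕ} (φ : Fin d → ℂ) (θ : Fin d → ℝ) :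
    ‖star (mcVec d θ) ⬝ᵥ φ‖ ^ 2
      = (d : ℝ)⁻¹ * ‖∑ i, Complex.exp (-(Complex.I * (θ i : ℂ))) * φ i‖ ^ 2 := by
  have h1 : star (mcVec d θ) ⬝ᵥ φ
      = (((Real.sqrt d)⁻¹ : ℝ) : ℂ) * ∑ i, Complex.exp (-(Complex.I * (θ i : ℂ))) * φ i := by
    simp [dotProduct, mcVec, Finset.mul_sum, ← Complex.exp_conj, mul_comm, mul_assoc]
  rw [h1, norm_mul, mul_pow, Complex.norm_real, Real.norm_eq_abs, abs_of_nonneg (by positivity),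
    ← Real.sqrt_inv, Real.sq_sqrt (by positivity)]

theorem stmt8 {d : ℕ} (hd : 0 < d) (φ : Fin d → ℂ)
    (hφ : star φ ⬝ᵥ φ = 1) :
    sInf {r : ℝ | ∃ θ : Fin d → ℝ,
        r = 1 - ‖star (mcVec d θ) ⬝ᵥ φ‖ ^ 2}
      = 1 - (d : ℝ)⁻¹ * (∑ i, ‖φ i‖) ^ 2 := by
  have hAle : ∀ θ : Fin d → ℝ,
      ‖∑ i, Complex.exp (-(Complex.I * (θ i : ℂ))) * φ i‖
        ≤ ∑ i, ‖φ i‖ := by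
    intro θ
    refine le_trans (norm_sum_le _ _) ?_
    refine Finset.sum_le_sum fun i _ => ?_
    rw [norm_mul, Complex.norm_exp]
    simp
  have hlb : ∀ r ∈ {r : ℝ | ∃ θ : Fin d → ℝ,
      r = 1 - ‖star (mcVec d θ) ⬝ᵥ φ‖ ^ 2},
      1 - (d : ℝ)⁻¹ * (∑ i, ‖φ i‖) ^ 2 ≤ r := by
    rintro r ⟨θ, rfl⟩
    rw [mc_dot_sq]
    have h1 := hAle θ
    have h2 : (0:ℝ) ≤ ‖∑ i, Complex.exp (-(Complex.I * (θ i : ℂ))) * φ i‖ :=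
      norm_nonneg _
    have hdinv : (0:ℝ) ≤ (d : ℝ)⁻¹ := by positivity
    have h3 := pow_le_pow_left₀ h2 h1 2
    nlinarith
  have hmem : (1 - (d : ℝ)⁻¹ * (∑ i, ‖φ i‖) ^ 2) ∈ {r : ℝ | ∃ θ : Fin d → ℝ,
      r = 1 - ‖star (mcVec d θ) ⬝ᵥ φ‖ ^ 2} := by
    refine ⟨fun i => Complex.arg (φ i), ?_⟩
    rw [mc_dot_sq]
    have hterm : ∀ i, Complex.exp (-(Complex.I * (Complex.arg (φ i) : ℂ))) * φ i
        = (‖φ i‖ : ℂ) := by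
      intro i
      have h := Complex.norm_mul_exp_arg_mul_I (φ i)
      calc Complex.exp (-(Complex.I * (Complex.arg (φ i) : ℂ))) * φ i
          = Complex.exp (-(Complex.I * (Complex.arg (φ i) : ℂ)))
            * ((‖φ i‖ : ℂ) * Complex.exp ((Complex.arg (φ i) : ℂ) * Complex.I)) := by
            rw [h]
        _ = (‖φ i‖ : ℂ) * Complex.exp
            (-(Complex.I * (Complex.arg (φ i) : ℂ)) + (Complex.arg (φ i) : ℂ) * Complex.I) := by
            rw [Complex.exp_add]; ring
        _ = (‖φ i‖ : ℂ) := by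
            rw [show (-(Complex.I * (Complex.arg (φ i) : ℂ)) + (Complex.arg (φ i) : ℂ) * Complex.I)
              = 0 by ring, Complex.exp_zero, mul_one]
    simp_rw [hterm]
    rw [← Complex.ofReal_sum, Complex.norm_real, Real.norm_eq_abs,
      abs_of_nonneg (Finset.sum_nonneg fun i _ => norm_nonneg _)]
  exact le_antisymm (csInf_le ⟨_, hlb⟩ hmem) (le_csInf ⟨_, hmem⟩ hlb)
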